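/- For all reals a > 0 and t > 0, lim_{R→∞} ∫_{−R}^{R} e^{−itξ} / (a − iξ) dξ = 2π e^{−at}, where the integrand is a complex-valued function of the real variable ξ and i is the imaginary unit. -/

import Mathlib

open MeasureTheory Real Filter Topology Set Complex
open scoped FourierTransform

lemma norm_cexp' (z : ℂ) : ‖Complex.exp z‖ = Real.exp z.re := Complex.norm_exp z

lemma re_neg_mul (c : ℂ) (x : ℝ) : (-(c * x)).re = -(c.re * x) := by
  simp [Complex.mul_re]

lemma integrableOn_x_exp (c : ℂ) (hc : 0 < c.re) :
    IntegrableOn (fun x : ℝ => (x : ℂ) * Complex.exp (-(c * x))) (Ioi 0) := by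
  have hi : IntegrableOn (fun x : ℝ => x ^ (1:ℝ) * Real.exp (-c.re * x ^ (1:ℝ))) (Ioi 0) :=
    integrableOn_rpow_mul_exp_neg_mul_rpow (by norm_num) (by norm_num) hc
  refine Integrable.mono' hi ?_ ?_
  · exact (Continuous.aestronglyMeasurable (by fun_prop)).restrict
  · filter_upwards [ae_restrict_mem measurableSet_Ioi] with x hx
    simp only [norm_mul, norm_cexp', re_neg_mul, Complex.norm_real, Real.norm_eq_abs]
    rw [Real.rpow_one, abs_of_pos hx, neg_mul]

lemma exp_decay_tendsto (c : ℝ) (hc : 0 < c) :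
    Tendsto (fun x : ℝ => Real.exp (-(c * x))) atTop (𝓝 0) :=
  Real.tendsto_exp_atBot.comp (tendsto_neg_atBot_iff.mpr (tendsto_id.const_mul_atTop hc))

lemma integral_x_exp (c : ℂ) (hc : 0 < c.re) :
    ∫ x : ℝ in Ioi 0, (x : ℂ) * Complex.exp (-(c * x)) = 1 / c ^ 2 := by
  have hc0 : c ≠ 0 := fun h => by simp [h] at hc
  have hderiv : ∀ x ∈ Ici (0:ℝ),
      HasDerivAt (fun x : ℝ => -(((x:ℂ) / c + 1 / c ^ 2) * Complex.exp (-(c * x))))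
        ((x : ℂ) * Complex.exp (-(c * x))) x := by
    intro x _
    have h0 : HasDerivAt (fun x : ℝ => -(c * (x:ℂ))) (-c) x := by
      have h00 := ((Complex.ofRealCLM.hasDerivAt (x := x)).const_mul c).neg
      convert h00 using 1
      · rfl
      · funext y; simp
      · simp
    have he : HasDerivAt (fun x : ℝ => Complex.exp (-(c * x)))
        (Complex.exp (-(c * x)) * (-c)) x := h0.cexp
    have h1 : HasDerivAt (fun x : ℝ => ((x:ℂ) / c + 1 / c ^ 2)) (1 / c) x := by
      have hid : HasDerivAt (fun y : ℝ => (y:ℂ)) 1 x := by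
        simpa using (hasDerivAt_id x).ofReal_comp
      exact (hid.div_const c).add_const (1 / c^2 : ℂ)
    have := (h1.mul he).neg
    convert this using 1
    · rfl
    · rfl
    field_simp
    ring
  have htend : Tendsto (fun x : ℝ => -(((x:ℂ) / c + 1 / c ^ 2) * Complex.exp (-(c * x))))
      atTop (𝓝 0) := by
    rw [tendsto_zero_iff_norm_tendsto_zero]
    have hb : ∀ᶠ x : ℝ in atTop, ‖-(((x:ℂ) / c + 1 / c ^ 2) * Complex.exp (-(c * x)))‖
        ≤ (x / ‖c‖ + 1 / ‖c‖^2) * Real.exp (-(c.re * x)) := by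
      filter_upwards [eventually_ge_atTop (0:ℝ)] with x hx
      rw [norm_neg, norm_mul, norm_cexp', re_neg_mul]
      gcongr
      refine (norm_add_le _ _).trans ?_
      have : ‖((x:ℂ)) / c‖ = x / ‖c‖ := by
        rw [norm_div, Complex.norm_real, Real.norm_eq_abs, _root_.abs_of_nonneg hx]
      rw [this]
      gcongr
      rw [norm_div, norm_one, norm_pow]
    refine squeeze_zero' (by filter_upwards with x using norm_nonneg _) hb ?_
    have h1 : Tendsto (fun x : ℝ => x / ‖c‖ * Real.exp (-(c.re * x))) atTop (𝓝 0) := by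
      have := (tendsto_pow_mul_exp_neg_atTop_nhds_zero 1).comp
        (tendsto_id.const_mul_atTop hc)
      have h2 := this.div_const (c.re * ‖c‖)
      simp only [Function.comp] at h2
      rw [zero_div] at h2
      refine h2.congr ?_
      intro x
      have hcre : c.re ≠ 0 := hc.ne'
      have hcn : ‖c‖ ≠ 0 := norm_ne_zero_iff.mpr hc0
      simp only [id, pow_one]
      rw [mul_comm c.re x]
      have e1 : x * c.re * rexp (-(x * c.re)) / (c.re * ‖c‖)
          = c.re / c.re * (x * rexp (-(x * c.re)) / ‖c‖) := by ring
      rw [e1, div_self hcre, one_mul, div_mul_eq_mul_div]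
    have h2 : Tendsto (fun x : ℝ => 1 / ‖c‖^2 * Real.exp (-(c.re * x))) atTop (𝓝 0) := by
      have := (exp_decay_tendsto c.re hc).const_mul (1 / ‖c‖^2 : ℝ)
      rwa [mul_zero] at this
    have := h1.add h2
    rw [add_zero] at this
    exact this.congr (fun x => by ring)
  have key := integral_Ioi_of_hasDerivAt_of_tendsto' hderiv (integrableOn_x_exp c hc) htend
  rw [key]
  simp

noncomputable def gg (a : ℝ) : ℝ → ℂ :=
  fun x => ((max x 0 : ℝ) : ℂ) * Complex.exp (-(a * (max x 0 : ℝ)))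

lemma gg_cont (a : ℝ) : Continuous (gg a) := by unfold gg; fun_prop

lemma gg_int (a : ℝ) (ha : 0 < a) : Integrable (gg a) := by
  rw [← integrableOn_univ, ← Iic_union_Ioi (a := (0:ℝ))]
  apply IntegrableOn.union
  · refine (integrableOn_zero (ε' := ℂ)).congr_fun (fun x hx => ?_) measurableSet_Iic
    have : max x 0 = 0 := max_eq_right hx.out
    simp [gg, this]
  · refine ((integrableOn_x_exp (a : ℂ) (by simpa using ha))).congr_fun
      (fun x hx => ?_) measurableSet_Ioi
    have : max x 0 = x := max_eq_left hx.out.le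
    simp [gg, this]

lemma gg_fourier (a : ℝ) (ha : 0 < a) (w : ℝ) :
    𝓕 (gg a) w = 1 / ((a : ℂ) + 2 * π * Complex.I * w) ^ 2 := by
  have hre : 0 < ((a : ℂ) + 2 * π * Complex.I * w).re := by
    simpa using ha
  rw [Real.fourier_real_eq_integral_exp_smul]
  rw [← integral_x_exp _ hre]
  rw [← setIntegral_eq_integral_of_forall_compl_eq_zero
    (s := Ioi (0:ℝ)) (f := fun v : ℝ => Complex.exp (↑(-2 * π * v * w) * Complex.I) • gg a v)
    (fun x hx => ?_)]
  · refine setIntegral_congr_fun measurableSet_Ioi (fun x hx => ?_)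
    have hm : max x 0 = x := max_eq_left (le_of_lt hx)
    simp only [gg, hm, smul_eq_mul]
    rw [mul_comm, mul_assoc, ← Complex.exp_add]
    congr 2
    push_cast
    ring
  · have hx0 : x ≤ 0 := not_lt.mp (by simpa using hx)
    have : max x 0 = 0 := max_eq_right hx0
    simp [gg, this]

lemma gg_fourier_int (a : ℝ) (ha : 0 < a) : Integrable (𝓕 (gg a)) := by
  have hfun : (𝓕 (gg a)) = fun w : ℝ => 1 / ((a : ℂ) + 2 * π * Complex.I * w) ^ 2 :=
    funext (gg_fourier a ha)
  rw [hfun]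
  set m : ℝ := min (a ^ 2) (4 * π ^ 2) with hm
  have hm0 : 0 < m := lt_min (by positivity) (by positivity)
  have key : ∀ w : ℝ, ‖(1 : ℂ) / ((a : ℂ) + 2 * π * Complex.I * w) ^ 2‖
      ≤ (1 / m) * (1 + w ^ 2)⁻¹ := by
    intro w
    have habs : ‖(a : ℂ) + 2 * π * Complex.I * w‖ ^ 2 = a ^ 2 + (2 * π * w) ^ 2 := by
      rw [← Complex.normSq_eq_norm_sq]
      simp [Complex.normSq_apply]
      ring
    rw [norm_div, norm_one, norm_pow, habs, one_div, one_div, ← mul_inv]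
    have h1 : m * (1 + w ^ 2) ≤ a ^ 2 + (2 * π * w) ^ 2 := by
      have l1 : m ≤ a ^ 2 := min_le_left _ _
      have l2 : m ≤ 4 * π ^ 2 := min_le_right _ _
      nlinarith [sq_nonneg w]
    exact inv_anti₀ (by positivity) h1
  have hne : ∀ w : ℝ, ((a : ℂ) + 2 * π * Complex.I * w) ^ 2 ≠ 0 := by
    intro w
    apply pow_ne_zero
    intro h
    have := congrArg Complex.re h
    simp at this
    exact ha.ne' this
  refine Integrable.mono' ((integrable_inv_one_add_sq).const_mul (1 / m)) ?_
    (Filter.Eventually.of_forall key)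
  exact (Continuous.div continuous_const (by fun_prop) hne).aestronglyMeasurable

lemma gg_inversion (a t : ℝ) (ha : 0 < a) (ht : 0 < t) :
    ∫ w : ℝ, Complex.exp (↑(-2 * π * w * (-t)) * Complex.I) • 𝓕 (gg a) w
      = (t : ℂ) * Complex.exp (-(a * t)) := by
  have h := (gg_int a ha).fourierInv_fourier_eq (gg_fourier_int a ha)
    ((gg_cont a).continuousAt (x := t))
  rw [Real.fourierInv_eq_fourier_neg,
    Real.fourier_real_eq_integral_exp_smul] at h
  rw [h]
  have hm : max t 0 = t := max_eq_left ht.le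
  simp [gg, hm]

lemma integral_G (a t : ℝ) (ha : 0 < a) (ht : 0 < t) :
    ∫ ξ : ℝ, Complex.exp (-Complex.I * t * ξ) / ((a : ℂ) - Complex.I * ξ) ^ 2
      = 2 * π * t * Complex.exp (-(a * t)) := by
  set G := fun ξ : ℝ => Complex.exp (-Complex.I * t * ξ) / ((a : ℂ) - Complex.I * ξ) ^ 2 with hG
  have hcomp : ∀ w : ℝ, G (-(2 * π) * w)
      = Complex.exp (↑(-2 * π * w * (-t)) * Complex.I) • 𝓕 (gg a) w := by
    intro w
    rw [gg_fourier a ha w]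
    simp only [hG, smul_eq_mul]
    have hz : -Complex.I * t * ((-(2 * π) * w : ℝ) : ℂ)
        = ((-2 * π * w * (-t) : ℝ) : ℂ) * Complex.I := by push_cast; ring
    have hden : (a : ℂ) - Complex.I * ((-(2 * π) * w : ℝ) : ℂ)
        = (a : ℂ) + 2 * π * Complex.I * w := by push_cast; ring
    rw [hz, hden, div_eq_mul_one_div]
  have hint := MeasureTheory.Measure.integral_comp_mul_left G (-(2 * π))
  have h2 : ∫ x : ℝ, G (-(2 * π) * x) = (t : ℂ) * Complex.exp (-(a * t)) := by
    rw [show (fun x : ℝ => G (-(2 * π) * x))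
        = fun w : ℝ => Complex.exp (↑(-2 * π * w * (-t)) * Complex.I) • 𝓕 (gg a) w
      from funext hcomp]
    exact gg_inversion a t ha ht
  have habs : |(-(2 * π))⁻¹| = (2 * π)⁻¹ := by
    rw [abs_inv, abs_neg, abs_of_pos Real.two_pi_pos]
  rw [h2, habs] at hint
  have h3 : ((2 * π : ℝ)) • ((2 * π : ℝ)⁻¹ • ∫ y : ℝ, G y)
      = (2 * π : ℝ) • ((t : ℂ) * Complex.exp (-(a * t))) := by rw [hint]
  rw [smul_smul, mul_inv_cancel₀ (by positivity), one_smul] at h3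
  rw [h3, Complex.real_smul]
  push_cast
  ring

lemma sub_I_ne (a : ℝ) (ha : 0 < a) (ξ : ℝ) : (a : ℂ) - Complex.I * ξ ≠ 0 := by
  intro h
  have := congrArg Complex.re h
  simp at this
  exact ha.ne' this

lemma abs_sub_I (a ξ : ℝ) : ‖(a : ℂ) - Complex.I * ξ‖ ^ 2 = a ^ 2 + ξ ^ 2 := by
  rw [← Complex.normSq_eq_norm_sq]
  simp [Complex.normSq_apply]
  ring

lemma integrable_G (a t : ℝ) (ha : 0 < a) :
    Integrable (fun ξ : ℝ => Complex.exp (-Complex.I * t * ξ) / ((a : ℂ) - Complex.I * ξ) ^ 2) := by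
  set m : ℝ := min (a ^ 2) 1 with hm
  have hm0 : 0 < m := lt_min (by positivity) one_pos
  have key : ∀ ξ : ℝ, ‖Complex.exp (-Complex.I * t * ξ) / ((a : ℂ) - Complex.I * ξ) ^ 2‖
      ≤ (1 / m) * (1 + ξ ^ 2)⁻¹ := by
    intro ξ
    have h1 : ‖Complex.exp (-Complex.I * t * ξ)‖ = 1 := by
      rw [Complex.norm_exp]
      simp [Complex.mul_re]
    rw [norm_div, h1, norm_pow, abs_sub_I, one_div, one_div, ← mul_inv]
    have hle : m * (1 + ξ ^ 2) ≤ a ^ 2 + ξ ^ 2 := by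
      have l1 : m ≤ a ^ 2 := min_le_left _ _
      have l2 : m ≤ 1 := min_le_right _ _
      nlinarith [sq_nonneg ξ]
    exact inv_anti₀ (by positivity) hle
  refine Integrable.mono' ((integrable_inv_one_add_sq).const_mul (1 / m)) ?_
    (Filter.Eventually.of_forall key)
  exact (Continuous.div (by fun_prop)
    (by fun_prop) (fun ξ => pow_ne_zero _ (sub_I_ne a ha ξ))).aestronglyMeasurable

/-- `lim_{R→∞} ∫_{−R}^{R} e^{−itξ}/(a − iξ) dξ = 2π e^{−at}` for `a, t > 0`. -/
theorem residue_type_integral_limit (a t : ℝ) (ha : 0 < a) (ht : 0 < t) :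
    Tendsto
      (fun R : ℝ =>
        ∫ ξ in Set.Icc (-R) R,
          Complex.exp (-Complex.I * t * ξ) / ((a : ℂ) - Complex.I * ξ))
      atTop (𝓝 ((2 * π * Real.exp (-a * t) : ℝ) : ℂ)) := by
  set f : ℝ → ℂ := fun ξ => Complex.exp (-Complex.I * t * ξ) / ((a : ℂ) - Complex.I * ξ) with hf
  set G : ℝ → ℂ := fun ξ => Complex.exp (-Complex.I * t * ξ) / ((a : ℂ) - Complex.I * ξ) ^ 2
    with hG
  set h : ℝ → ℂ := fun ξ =>
    Complex.I / t * (Complex.exp (-Complex.I * t * ξ) / ((a : ℂ) - Complex.I * ξ)) with hh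
  have ht0 : (t : ℂ) ≠ 0 := Complex.ofReal_ne_zero.mpr ht.ne'
  have hfc : Continuous f := Continuous.div (by fun_prop) (by fun_prop) (sub_I_ne a ha)
  have hGc : Continuous G :=
    Continuous.div (by fun_prop) (by fun_prop) (fun ξ => pow_ne_zero _ (sub_I_ne a ha ξ))
  have hderiv : ∀ ξ : ℝ, HasDerivAt h (f ξ - (1 / t) * G ξ) ξ := by
    intro ξ
    have hid : HasDerivAt (fun y : ℝ => (y : ℂ)) 1 ξ := by
      simpa using (hasDerivAt_id ξ).ofReal_comp
    have he : HasDerivAt (fun ξ : ℝ => Complex.exp (-Complex.I * t * ξ))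
        (Complex.exp (-Complex.I * t * ξ) * (-Complex.I * t)) ξ := by
      have := (hid.const_mul (-Complex.I * t)).cexp
      simpa using this
    have hb : HasDerivAt (fun ξ : ℝ => (a : ℂ) - Complex.I * ξ) (-Complex.I) ξ := by
      simpa using (hid.const_mul Complex.I).const_sub (a : ℂ)
    have hinv : HasDerivAt (fun ξ : ℝ => 1 / ((a : ℂ) - Complex.I * ξ))
        ((0 * ((a : ℂ) - Complex.I * ξ) - 1 * (-Complex.I)) / ((a : ℂ) - Complex.I * ξ) ^ 2) ξ :=
      (hasDerivAt_const ξ (1 : ℂ)).div hb (sub_I_ne a ha ξ)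
    have hd := (he.mul hinv).const_mul (Complex.I / t)
    have heq : h = fun ξ : ℝ => Complex.I / t *
        (Complex.exp (-Complex.I * t * ξ) * (1 / ((a : ℂ) - Complex.I * ξ))) := by
      funext ξ; simp [hh, div_eq_mul_inv]
    rw [heq]
    convert hd using 1
    · rfl
    · rfl
    have i2 : Complex.I ^ 2 = -1 := Complex.I_sq
    have i3 : Complex.I ^ 3 = -Complex.I := by rw [pow_succ, i2, neg_one_mul]
    have i4 : Complex.I ^ 4 = 1 := by
      rw [pow_succ, i3, neg_mul, Complex.I_mul_I, neg_neg]
    have i5 : Complex.I ^ 5 = Complex.I := by rw [pow_succ, i4, one_mul]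
    have i6 : Complex.I ^ 6 = -1 := by rw [pow_succ, i5, Complex.I_mul_I]
    have i7 : Complex.I ^ 7 = -Complex.I := by rw [pow_succ, i6, neg_one_mul]
    simp only [hf, hG]
    field_simp [sub_I_ne a ha ξ]
    ring_nf
    simp only [i2, i3, i4, i5, i6, i7]
    ring
  have key : ∀ R : ℝ, ∫ ξ in (-R)..R, f ξ
      = (h R - h (-R)) + (1 / t) * ∫ ξ in (-R)..R, G ξ := by
    intro R
    have i1 : ∫ ξ in (-R)..R, (f ξ - (1 / t) * G ξ) = h R - h (-R) :=
      intervalIntegral.integral_eq_sub_of_hasDerivAt (fun ξ _ => hderiv ξ)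
        ((hfc.sub (continuous_const.mul hGc)).intervalIntegrable _ _)
    have i2 : ∫ ξ in (-R)..R, (f ξ - (1 / t) * G ξ)
        = (∫ ξ in (-R)..R, f ξ) - ∫ ξ in (-R)..R, (1 / t) * G ξ :=
      intervalIntegral.integral_sub (hfc.intervalIntegrable _ _)
        ((continuous_const.mul hGc).intervalIntegrable _ _)
    have i3 : ∫ ξ in (-R)..R, (1 / t : ℂ) * G ξ = (1 / t) * ∫ ξ in (-R)..R, G ξ :=
      intervalIntegral.integral_const_mul _ _
    rw [i2, i3] at i1
    linear_combination i1
  have T1 : Tendsto (fun R : ℝ => h R - h (-R)) atTop (𝓝 0) := by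
    rw [tendsto_zero_iff_norm_tendsto_zero]
    have hbd : ∀ ξ : ℝ, ξ ≠ 0 → ‖h ξ‖ ≤ 1 / (t * |ξ|) := by
      intro ξ hξ
      have h1 : ‖Complex.exp (-Complex.I * t * ξ)‖ = 1 := by
        rw [Complex.norm_exp]
        simp [Complex.mul_re]
      have habs : |ξ| ≤ ‖(a : ℂ) - Complex.I * ξ‖ := by
        nlinarith [abs_sub_I a ξ, _root_.sq_abs ξ, norm_nonneg
          ((a : ℂ) - Complex.I * ξ), abs_nonneg ξ, sq_nonneg a,
          sq_nonneg (|ξ| - ‖(a : ℂ) - Complex.I * ξ‖)]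
      have hξpos : 0 < |ξ| := abs_pos.mpr hξ
      have hnorm : ‖h ξ‖ = 1 / (t * ‖(a : ℂ) - Complex.I * ξ‖) := by
        rw [hh]
        simp only [norm_mul, norm_div, h1, Complex.norm_I,
          Complex.norm_real, Real.norm_eq_abs, _root_.abs_of_pos ht]
        field_simp
      rw [hnorm]
      gcongr
    have hb2 : ∀ᶠ R : ℝ in atTop, ‖h R - h (-R)‖ ≤ 2 / (t * R) := by
      filter_upwards [eventually_ge_atTop (1 : ℝ)] with R hR
      have hR0 : R ≠ 0 := by linarith
      have e1 := hbd R hR0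
      have e2 := hbd (-R) (by simpa using hR0)
      have : ‖h R - h (-R)‖ ≤ ‖h R‖ + ‖h (-R)‖ := norm_sub_le _ _
      have habsR : |R| = R := abs_of_pos (by linarith)
      have habsR' : |(-R : ℝ)| = R := by rw [abs_neg, habsR]
      rw [habsR] at e1
      rw [habsR'] at e2
      calc ‖h R - h (-R)‖ ≤ ‖h R‖ + ‖h (-R)‖ := norm_sub_le _ _
        _ ≤ 1 / (t * R) + 1 / (t * R) := add_le_add e1 e2
        _ = 2 / (t * R) := by ring
    refine squeeze_zero' (by filter_upwards with x using norm_nonneg _) hb2 ?_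
    exact Tendsto.div_atTop tendsto_const_nhds (tendsto_id.const_mul_atTop ht)
  have T2 : Tendsto (fun R : ℝ => ∫ ξ in (-R)..R, G ξ) atTop
      (𝓝 (2 * π * t * Complex.exp (-(a * t)))) := by
    have := intervalIntegral_tendsto_integral (integrable_G a t ha)
      (tendsto_neg_atBot_iff.mpr tendsto_id) tendsto_id
    rwa [integral_G a t ha ht] at this
  have Tfull : Tendsto (fun R : ℝ => (h R - h (-R)) + (1 / t : ℂ) * ∫ ξ in (-R)..R, G ξ)
      atTop (𝓝 ((2 * π * Real.exp (-a * t) : ℝ) : ℂ)) := by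
    have := T1.add ((T2.const_mul (1 / t : ℂ)))
    rw [zero_add] at this
    convert this using 2
    push_cast [Complex.ofReal_exp]
    field_simp
  refine Tfull.congr' ?_
  filter_upwards [eventually_ge_atTop (0 : ℝ)] with R hR
  rw [← key R]
  rw [intervalIntegral.integral_of_le (by linarith), ← integral_Icc_eq_integral_Ioc]
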